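/- For κ < 0 and σ* > 0, if Δ > 0 then 0 < Δ·(1 − exp(κσ*)) < Ê(Δ, σ*) < Δ, where Ê(Δ, σ*) = −(1/κ)·ln(exp(κσ*) + exp(−κΔ)·(1 − exp(κσ*))). -/

import Mathlib

theorem stmt_4 (κ σ Δ : ℝ) (hκ : κ < 0) (hσ : 0 < σ) (hΔ : 0 < Δ) :
    0 < Δ * (1 - Real.exp (κ * σ)) ∧
    Δ * (1 - Real.exp (κ * σ)) <
      -(1/κ) * Real.log (Real.exp (κ * σ) + Real.exp (-κ * Δ) * (1 - Real.exp (κ * σ))) ∧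
    -(1/κ) * Real.log (Real.exp (κ * σ) + Real.exp (-κ * Δ) * (1 - Real.exp (κ * σ))) < Δ := by
  have hκσ : κ * σ < 0 := mul_neg_of_neg_of_pos hκ hσ
  set p := Real.exp (κ * σ) with hpdef
  have hp0 : 0 < p := Real.exp_pos _
  have hp1 : p < 1 := Real.exp_lt_one_iff.mpr hκσ
  have hq : 0 < 1 - p := by linarith
  have hnegκ : 0 < -κ := neg_pos.mpr hκ
  have ht : 0 < -κ * Δ := mul_pos hnegκ hΔ
  set E := Real.exp (-κ * Δ) with hEdef
  have hE1 : 1 < E := by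
    have : Real.exp 0 < Real.exp (-κ * Δ) := Real.exp_lt_exp.mpr ht
    rw [Real.exp_zero] at this; exact this
  have hA1 : 1 < p + E * (1 - p) := by nlinarith
  have hApos : 0 < p + E * (1 - p) := by linarith
  -- strict convexity of exp
  have key := strictConvexOn_exp.2 (Set.mem_univ (0:ℝ)) (Set.mem_univ (-κ * Δ))
    (by linarith : (0:ℝ) ≠ -κ * Δ) hp0 hq (by ring)
  simp only [smul_eq_mul, mul_zero, zero_add, Real.exp_zero, mul_one] at key
  have h2 : (1 - p) * (-κ * Δ) < Real.log (p + E * (1 - p)) := by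
    have hl := Real.log_lt_log (Real.exp_pos _) key
    rw [Real.log_exp] at hl
    have : p + (1 - p) * E = p + E * (1 - p) := by ring
    rwa [this] at hl
  have hAE : p + E * (1 - p) < E := by nlinarith [mul_pos hp0 (sub_pos.mpr hE1)]
  have h3 : Real.log (p + E * (1 - p)) < -κ * Δ := by
    have := Real.log_lt_log hApos hAE
    rwa [hEdef, Real.log_exp] at this
  have hform : -(1/κ) * Real.log (p + E * (1 - p)) = Real.log (p + E * (1 - p)) / (-κ) := by
    field_simp
  refine ⟨mul_pos hΔ hq, ?_, ?_⟩
  · rw [hform, lt_div_iff₀ hnegκ]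
    nlinarith [h2]
  · rw [hform, div_lt_iff₀ hnegκ]
    nlinarith [h3]
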